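/- Let F be a function from 4×4 density matrices to nonnegative reals that is convex (F(Σᵢ pᵢ ρᵢ) ≤ Σᵢ pᵢ F(ρᵢ) for every finite convex combination of density matrices) and monotone under real operations (F(Λ(ρ)) ≤ F(ρ) whenever Λ(ρ) = Σₘ Kₘ ρ Kₘ† with all Kₘ having real entries and Σₘ Kₘ†Kₘ = I). Then for every separable two-qubit state ρ = Σᵢ pᵢ σᵢ ⊗ τᵢ (pᵢ ≥ 0, Σᵢ pᵢ = 1, σᵢ, τᵢ 2×2 density matrices), F(ρ) ≤ F(M₊ ⊗ M₊), where M₊ = (1/2)[[1, −i],[i, 1]]. -/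

import Mathlib

open Matrix Kronecker BigOperators
open scoped ComplexOrder

noncomputable section

/-- A density matrix: positive semidefinite with trace 1. -/
def IsDensityMatrix {n : Type*} [Fintype n] [DecidableEq n] (ρ : Matrix n n ℂ) : Prop :=
  ρ.PosSemidef ∧ ρ.trace = 1

/-- The l₁-norm imaginarity measure: sum of |Im ρᵢⱼ| over off-diagonal entries. -/
noncomputable def Fl1 {n : Type*} [Fintype n] [DecidableEq n] (ρ : Matrix n n ℂ) : ℝ :=
  ∑ i, ∑ j, if i = j then 0 else |(ρ i j).im|

/-- The square root of a positive semidefinite matrix (removed from Mathlib; restored with its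
Dec 2024 definition). -/
noncomputable def Matrix.PosSemidef.sqrt {n : Type*} [Fintype n] [DecidableEq n] {A : Matrix n n ℂ}
    (hA : A.PosSemidef) : Matrix n n ℂ :=
  (hA.1.eigenvectorUnitary : Matrix n n ℂ) *
    diagonal (fun i => ((Real.sqrt (hA.1.eigenvalues i) : ℝ) : ℂ)) *
    (star hA.1.eigenvectorUnitary : Matrix n n ℂ)

/-- The trace norm ‖M‖₁ = Tr √(M†M). -/
noncomputable def traceNorm {n : Type*} [Fintype n] [DecidableEq n] (M : Matrix n n ℂ) : ℝ :=
  ((Matrix.posSemidef_conjTranspose_mul_self M).sqrt.trace).re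

/-- The robustness of imaginarity: (1/2)‖ρ − ρᵀ‖₁. -/
noncomputable def FR {n : Type*} [Fintype n] [DecidableEq n] (ρ : Matrix n n ℂ) : ℝ :=
  traceNorm (ρ - ρᵀ) / 2

/-- Von Neumann entropy (base-2), via eigenvalues of a Hermitian matrix
(junk value 0 if not Hermitian). -/
noncomputable def vnEntropy {n : Type*} [Fintype n] [DecidableEq n] (σ : Matrix n n ℂ) : ℝ :=
  if h : σ.IsHermitian then -∑ j, (h.eigenvalues j) * Real.logb 2 (h.eigenvalues j) else 0

/-- The relative entropy of imaginarity: S(Re ρ) − S(ρ), Re ρ = (ρ + ρᵀ)/2. -/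
noncomputable def Fr {n : Type*} [Fintype n] [DecidableEq n] (ρ : Matrix n n ℂ) : ℝ :=
  vnEntropy ((1/2 : ℂ) • (ρ + ρᵀ)) - vnEntropy ρ

/-- The canonical single-qubit state ρ_A. -/
noncomputable def rhoA (A : ℝ) : Matrix (Fin 2) (Fin 2) ℂ :=
  !![(((1 + A) / 2 : ℝ) : ℂ), -(Complex.I / 2) * (Real.sqrt (1 - A ^ 2) : ℂ);
     (Complex.I / 2) * (Real.sqrt (1 - A ^ 2) : ℂ), (((1 - A) / 2 : ℝ) : ℂ)]

/-- Density matrix of the maximal imaginary state |+⟩ = (|0⟩ + i|1⟩)/√2. -/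
noncomputable def Mplus : Matrix (Fin 2) (Fin 2) ℂ :=
  (1/2 : ℂ) • !![1, -Complex.I; Complex.I, 1]


section AuxImaginarity

open scoped MatrixOrder in
theorem Matrix.posSemidef_iff_eq_transpose_mul_self {n : Type*} [Fintype n] [DecidableEq n]
    {A : Matrix n n ℂ} : A.PosSemidef ↔ ∃ B : Matrix n n ℂ, A = Bᴴ * B := by
  constructor
  · intro hA
    obtain ⟨B, hB⟩ := CStarAlgebra.nonneg_iff_eq_star_mul_self.mp hA.nonneg
    exact ⟨B, hB⟩
  · rintro ⟨B, rfl⟩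
    exact posSemidef_conjTranspose_mul_self B

lemma kron_conjT {l m n p : Type*} (A : Matrix l m ℂ) (B : Matrix n p ℂ) :
    (A ⊗ₖ B)ᴴ = Aᴴ ⊗ₖ Bᴴ := by
  ext ⟨i,j⟩ ⟨k,l⟩
  simp [conjTranspose_apply, kroneckerMap_apply, star_mul']

lemma sum_kron_sum {ι κ : Type*} [Fintype ι] [Fintype κ]
    (M : ι → Matrix (Fin 2) (Fin 2) ℂ) (N : κ → Matrix (Fin 2) (Fin 2) ℂ) :
    (∑ a, M a) ⊗ₖ (∑ b, N b) = ∑ a, ∑ b, M a ⊗ₖ N b := by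
  ext ⟨i,j⟩ ⟨k,l⟩
  simp [kroneckerMap_apply, Matrix.sum_apply, Finset.sum_mul_sum]

lemma Mplus_density : IsDensityMatrix Mplus := by
  constructor
  · rw [Matrix.posSemidef_iff_eq_transpose_mul_self]
    refine ⟨!![((Real.sqrt 2)⁻¹ : ℂ), -((Real.sqrt 2)⁻¹ : ℂ) * Complex.I; 0, 0], ?_⟩
    ext i j
    fin_cases i <;> fin_cases j <;>
      simp [Matrix.mul_apply, Matrix.conjTranspose_apply, Fin.sum_univ_two, Mplus,
        Complex.ext_iff, Complex.star_def, _root_.map_mul, Complex.conj_ofReal] <;>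
      nlinarith [Real.mul_self_sqrt (show (0:ℝ) ≤ 2 by norm_num)]
  · simp [Matrix.trace, Matrix.diag, Fin.sum_univ_two, Mplus]
    norm_num

lemma kron_density {σ τ : Matrix (Fin 2) (Fin 2) ℂ} (hσ : IsDensityMatrix σ)
    (hτ : IsDensityMatrix τ) : IsDensityMatrix (σ ⊗ₖ τ) := by
  constructor
  · obtain ⟨B, hB⟩ := Matrix.posSemidef_iff_eq_transpose_mul_self.mp hσ.1
    obtain ⟨C, hC⟩ := Matrix.posSemidef_iff_eq_transpose_mul_self.mp hτ.1
    rw [Matrix.posSemidef_iff_eq_transpose_mul_self]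
    exact ⟨B ⊗ₖ C, by rw [hB, hC, Matrix.mul_kronecker_mul, kron_conjT]⟩
  · rw [Matrix.trace_kronecker, hσ.2, hτ.2, mul_one]

set_option maxHeartbeats 1000000 in
lemma qubit_prep (σ : Matrix (Fin 2) (Fin 2) ℂ) (h : IsDensityMatrix σ) :
    ∃ K : Fin 2 × Fin 2 → Matrix (Fin 2) (Fin 2) ℂ,
      (∀ m i j, (K m i j).im = 0) ∧ (∑ m, (K m)ᴴ * K m) = 1 ∧
      (∑ m, K m * Mplus * (K m)ᴴ) = σ := by
  obtain ⟨B, hB⟩ := Matrix.posSemidef_iff_eq_transpose_mul_self.mp h.1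
  refine ⟨fun ms => Matrix.of fun i j =>
    if ms.2 = 0 then (if j = 0 then ((B ms.1 i).re : ℂ) else (-(B ms.1 i).im : ℂ))
    else (if j = 0 then ((B ms.1 i).im : ℂ) else ((B ms.1 i).re : ℂ)), ?_, ?_, ?_⟩
  · intro m i j
    dsimp only [Matrix.of_apply]
    split <;> split <;> simp
  · have htr := h.2
    rw [hB] at htr
    simp only [Matrix.trace, Matrix.diag, Matrix.mul_apply, Matrix.conjTranspose_apply,
      Fin.sum_univ_two] at htr
    have h1 := congrArg Complex.re htr
    simp only [Complex.star_def, Complex.add_re, Complex.mul_re, Complex.conj_re, Complex.conj_im,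
      Complex.one_re, neg_mul, sub_neg_eq_add] at h1
    ext j k
    simp only [Matrix.sum_apply, Matrix.mul_apply, Matrix.conjTranspose_apply, Matrix.of_apply,
      Fintype.sum_prod_type, Fin.sum_univ_two]
    fin_cases j <;> fin_cases k <;>
      simp only [Matrix.one_apply, Fin.zero_eta, Fin.mk_one, if_true, if_false,
        Matrix.cons_val', Matrix.cons_val_zero, Matrix.cons_val_one, Matrix.head_cons,
        one_ne_zero, zero_ne_one, reduceIte] <;>
      · simp only [Complex.ext_iff, Complex.add_re, Complex.add_im, Complex.mul_re,
          Complex.mul_im, Complex.ofReal_re, Complex.ofReal_im, Complex.neg_re, Complex.neg_im,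
          Complex.one_re, Complex.one_im, Complex.zero_re, Complex.zero_im, map_neg,
          Complex.star_def, Complex.conj_ofReal, Complex.conj_re, Complex.conj_im]
        constructor <;> nlinarith [h1]
  · rw [hB]
    ext i j
    simp only [Matrix.sum_apply, Matrix.mul_apply, Matrix.conjTranspose_apply, Matrix.of_apply,
      Mplus, Matrix.smul_apply, Fintype.sum_prod_type, Fin.sum_univ_two]
    fin_cases i <;> fin_cases j <;>
      · simp only [Complex.ext_iff, Complex.add_re, Complex.add_im, Complex.mul_re,
          Complex.mul_im, Complex.ofReal_re, Complex.ofReal_im, Complex.neg_re, Complex.neg_im,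
          Complex.I_re, Complex.I_im, Complex.one_re, Complex.one_im, Complex.conj_re,
          Complex.conj_im, Matrix.cons_val', Matrix.cons_val_zero, Matrix.cons_val_one,
          Matrix.head_cons, Matrix.smul_apply, Fin.isValue, map_neg,
          Complex.star_def, Complex.conj_ofReal]
        norm_num
        constructor <;> ring

lemma twoqubit_prep (σ τ : Matrix (Fin 2) (Fin 2) ℂ) (hσ : IsDensityMatrix σ)
    (hτ : IsDensityMatrix τ) :
    ∃ K : (Fin 2 × Fin 2) × (Fin 2 × Fin 2) → Matrix (Fin 2 × Fin 2) (Fin 2 × Fin 2) ℂ,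
      (∀ m i j, (K m i j).im = 0) ∧ (∑ m, (K m)ᴴ * K m) = 1 ∧
      (∑ m, K m * (Mplus ⊗ₖ Mplus) * (K m)ᴴ) = σ ⊗ₖ τ := by
  obtain ⟨A, hA1, hA2, hA3⟩ := qubit_prep σ hσ
  obtain ⟨B, hB1, hB2, hB3⟩ := qubit_prep τ hτ
  refine ⟨fun m => A m.1 ⊗ₖ B m.2, ?_, ?_, ?_⟩
  · rintro ⟨a,b⟩ ⟨i1,i2⟩ ⟨j1,j2⟩
    simp only [kroneckerMap_apply, Complex.mul_im]
    rw [hA1, hB1]; ring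
  · have : ∀ m : (Fin 2 × Fin 2) × (Fin 2 × Fin 2),
        (A m.1 ⊗ₖ B m.2)ᴴ * (A m.1 ⊗ₖ B m.2) = ((A m.1)ᴴ * A m.1) ⊗ₖ ((B m.2)ᴴ * B m.2) := by
      intro m; rw [kron_conjT, Matrix.mul_kronecker_mul]
    simp only [this]
    rw [Fintype.sum_prod_type]; dsimp only; rw [← sum_kron_sum, hA2, hB2, Matrix.one_kronecker_one]
  · have : ∀ m : (Fin 2 × Fin 2) × (Fin 2 × Fin 2),
        (A m.1 ⊗ₖ B m.2) * (Mplus ⊗ₖ Mplus) * (A m.1 ⊗ₖ B m.2)ᴴ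
          = (A m.1 * Mplus * (A m.1)ᴴ) ⊗ₖ (B m.2 * Mplus * (B m.2)ᴴ) := by
      intro m; rw [kron_conjT, Matrix.mul_kronecker_mul, Matrix.mul_kronecker_mul]
    simp only [this]
    rw [Fintype.sum_prod_type]; dsimp only; rw [← sum_kron_sum, hA3, hB3]

end AuxImaginarity

/-- for any convex measure monotone under real operations, the value on
any separable two-qubit state is at most the value on M₊ ⊗ M₊. -/
theorem separable_measure_le_maximal_imaginary
    (F : Matrix (Fin 2 × Fin 2) (Fin 2 × Fin 2) ℂ → ℝ)
    (hnonneg : ∀ ρ, IsDensityMatrix ρ → 0 ≤ F ρ)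
    (hconvex : ∀ (s : ℕ) (p : Fin s → ℝ)
      (ρs : Fin s → Matrix (Fin 2 × Fin 2) (Fin 2 × Fin 2) ℂ),
      (∀ i, 0 ≤ p i) → ((∑ i, p i) = 1) → (∀ i, IsDensityMatrix (ρs i)) →
      F (∑ i, (p i : ℂ) • ρs i) ≤ ∑ i, p i * F (ρs i))
    (hmono : ∀ (N : ℕ) (K : Fin N → Matrix (Fin 2 × Fin 2) (Fin 2 × Fin 2) ℂ),
      (∀ m i j, (K m i j).im = 0) → ((∑ m, (K m)ᴴ * K m) = 1) →
      ∀ ρ, IsDensityMatrix ρ → F (∑ m, K m * ρ * (K m)ᴴ) ≤ F ρ)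
    (s : ℕ) (p : Fin s → ℝ) (σ τ : Fin s → Matrix (Fin 2) (Fin 2) ℂ)
    (hp : ∀ i, 0 ≤ p i) (hpsum : (∑ i, p i) = 1)
    (hσ : ∀ i, IsDensityMatrix (σ i)) (hτ : ∀ i, IsDensityMatrix (τ i)) :
    F (∑ i, (p i : ℂ) • (σ i ⊗ₖ τ i)) ≤ F (Mplus ⊗ₖ Mplus) := by
  have hdens : ∀ i, IsDensityMatrix (σ i ⊗ₖ τ i) := fun i => kron_density (hσ i) (hτ i)
  have key : ∀ i, F (σ i ⊗ₖ τ i) ≤ F (Mplus ⊗ₖ Mplus) := by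
    intro i
    obtain ⟨K, h1, h2, h3⟩ := twoqubit_prep (σ i) (τ i) (hσ i) (hτ i)
    let e1 : Fin 2 × Fin 2 ≃ Fin 4 := finProdFinEquiv
    let e : ((Fin 2 × Fin 2) × (Fin 2 × Fin 2)) ≃ Fin 16 :=
      (Equiv.prodCongr e1 e1).trans finProdFinEquiv
    have hm := hmono 16 (fun k => K (e.symm k)) (fun m i j => h1 _ i j)
      (by rw [Equiv.sum_comp e.symm (fun m => (K m)ᴴ * K m)]; exact h2)
      (Mplus ⊗ₖ Mplus) (kron_density Mplus_density Mplus_density)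
    rwa [Equiv.sum_comp e.symm (fun m => K m * (Mplus ⊗ₖ Mplus) * (K m)ᴴ), h3] at hm
  calc F (∑ i, (p i : ℂ) • (σ i ⊗ₖ τ i)) ≤ ∑ i, p i * F (σ i ⊗ₖ τ i) :=
        hconvex s p _ hp hpsum hdens
    _ ≤ ∑ i, p i * F (Mplus ⊗ₖ Mplus) :=
        Finset.sum_le_sum fun i _ => mul_le_mul_of_nonneg_left (key i) (hp i)
    _ = F (Mplus ⊗ₖ Mplus) := by rw [← Finset.sum_mul, hpsum, one_mul]
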